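/- The one-way LOCC decoupling works: applying the quantum Fourier transform to the qudit in the state ψ' = Σᵢ cᵢ|i⟩⊗|underline(2^{d-i})⟩, then measuring the qudit in the standard basis with outcome m, and applying the correction unitary U_D^{(m)} = Σⱼ e^{-2πi jm/d}|underline(2^{d-j})⟩⟨underline(2^{d-j})| to the qubits, yields the post-measurement qubit state Σᵢ cᵢ|underline(2^{d-i})⟩ for every outcome m, each occurring with probability 1/d. -/

import Mathlib

open scoped BigOperators

/-- The `d`-qubit configuration `|2^{d-j}⟩` with a single `1` in position `j`. -/
def bitv (d : ℕ) (j : Fin d) : Fin d → Fin 2 := fun t => if t = j then 1 else 0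

/-- The coefficients of `(QFT ⊗ 1) ψ'` for `ψ' = ∑ⱼ cⱼ|j⟩⊗|2^{d-j}⟩`:
`Φ m f = (1/√d) ∑ⱼ e^{2πi jm/d} ⟨f|2^{d-j}⟩ cⱼ` is the (unnormalized) qubit
amplitude conditioned on qudit measurement outcome `m`. -/
noncomputable def Phi (d : ℕ) (c : Fin d → ℂ) (m : Fin d) (f : Fin d → Fin 2) : ℂ :=
  (1 / (Real.sqrt d : ℂ)) * ∑ j : Fin d,
    Complex.exp (2 * (Real.pi : ℂ) * Complex.I * (j : ℕ) * (m : ℕ) / d) *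
      (if f = bitv d j then c j else 0)

/-- The correction unitary `U_D^{(m)} = ∑ⱼ e^{-2πi jm/d}|2^{d-j}⟩⟨2^{d-j}|`. -/
noncomputable def UDm (d : ℕ) (m : Fin d) :
    Matrix (Fin d → Fin 2) (Fin d → Fin 2) ℂ := fun f f' =>
  if f = f' then
    ∑ j : Fin d,
      if f = bitv d j then Complex.exp (-(2 * (Real.pi : ℂ) * Complex.I * (j : ℕ) * (m : ℕ) / d))
      else 0
  else 0

lemma bitv_inj (d : ℕ) : Function.Injective (bitv d) := by
  intro a b h
  by_contra hne
  have := congrFun h a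
  simp [bitv, hne] at this

lemma Phi_bitv (d : ℕ) (c : Fin d → ℂ) (m j : Fin d) :
    Phi d c m (bitv d j) = (1 / (Real.sqrt d : ℂ)) *
      (Complex.exp (2 * (Real.pi : ℂ) * Complex.I * (j : ℕ) * (m : ℕ) / d) * c j) := by
  unfold Phi
  congr 1
  rw [Finset.sum_eq_single j]
  · simp
  · intro b _ hb
    have : bitv d j ≠ bitv d b := fun h => hb ((bitv_inj d) h).symm
    simp [this]
  · simp

lemma Phi_not (d : ℕ) (c : Fin d → ℂ) (m : Fin d) (f : Fin d → Fin 2)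
    (h : ∀ j, f ≠ bitv d j) : Phi d c m f = 0 := by
  unfold Phi
  rw [Finset.sum_eq_zero]
  · ring
  · intro j _; simp [h j]

lemma norm_exp_unit (x : ℂ) (r : ℝ) (h : x = (r : ℂ) * Complex.I) :
    ‖Complex.exp x‖ = 1 := by
  subst h
  exact Complex.norm_exp_ofReal_mul_I r


/-- The one-way LOCC decoupling works: measuring the qudit of `(QFT ⊗ 1)ψ'` in the
standard basis yields each outcome `m` with probability `1/d`, and after the
correction `U_D^{(m)}` the normalized post-measurement qubit state is
`∑ᵢ cᵢ|2^{d-i}⟩` for every outcome `m`. -/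
theorem stmt_16 (d : ℕ) (hd : 0 < d) (c : Fin d → ℂ)
    (hnorm : ∑ i : Fin d, ‖c i‖ ^ 2 = 1) (m : Fin d) :
    (∑ f : Fin d → Fin 2, ‖Phi d c m f‖ ^ 2) = 1 / d ∧
    (UDm d m).mulVec (fun f => (Real.sqrt d : ℂ) * Phi d c m f) =
      fun f => ∑ i : Fin d, if f = bitv d i then c i else 0 := by
  have hdR : (0:ℝ) < d := Nat.cast_pos.mpr hd
  have hsq : Real.sqrt d ≠ 0 := ne_of_gt (Real.sqrt_pos.mpr hdR)
  have hsqC : ((Real.sqrt d : ℝ) : ℂ) ≠ 0 := by exact_mod_cast hsq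
  have hexp : ∀ j : Fin d,
      ‖Complex.exp (2 * (Real.pi : ℂ) * Complex.I * (j : ℕ) * (m : ℕ) / d)‖ = 1 := by
    intro j
    apply norm_exp_unit _ (2 * Real.pi * j * m / d)
    push_cast
    ring
  constructor
  · have h1 : (∑ f : Fin d → Fin 2, ‖Phi d c m f‖ ^ 2)
        = ∑ f ∈ Finset.image (bitv d) Finset.univ, ‖Phi d c m f‖ ^ 2 := by
      refine (Finset.sum_subset (Finset.subset_univ _) ?_).symm
      intro f _ hf
      have : ∀ j, f ≠ bitv d j := by
        intro j hj
        exact hf (Finset.mem_image.mpr ⟨j, Finset.mem_univ j, hj.symm⟩)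
      rw [Phi_not d c m f this]
      simp
    rw [h1, Finset.sum_image (fun a _ b _ h => bitv_inj d h)]
    have : ∀ j : Fin d, ‖Phi d c m (bitv d j)‖ ^ 2 = (1/d) * ‖c j‖ ^ 2 := by
      intro j
      rw [Phi_bitv]
      rw [norm_mul, norm_mul, hexp, norm_div, norm_one]
      rw [Complex.norm_real, Real.norm_eq_abs, abs_of_nonneg (Real.sqrt_nonneg _)]
      rw [one_mul]
      rw [mul_pow, div_pow, one_pow, Real.sq_sqrt hdR.le]
    simp only [this, ← Finset.mul_sum, hnorm, mul_one]
  · funext f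
    simp only [Matrix.mulVec, dotProduct, UDm, ite_mul, zero_mul]
    rw [Finset.sum_ite_eq]
    simp only [Finset.mem_univ, if_true]
    by_cases h : ∃ j, f = bitv d j
    · obtain ⟨j, rfl⟩ := h
      rw [Phi_bitv]
      have hL : (∑ j' : Fin d, if bitv d j = bitv d j' then
          Complex.exp (-(2 * (Real.pi : ℂ) * Complex.I * (j' : ℕ) * (m : ℕ) / d)) else 0)
          = Complex.exp (-(2 * (Real.pi : ℂ) * Complex.I * (j : ℕ) * (m : ℕ) / d)) := by
        rw [Finset.sum_eq_single j]
        · simp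
        · intro b _ hb
          have : bitv d j ≠ bitv d b := fun h => hb ((bitv_inj d) h).symm
          simp [this]
        · simp
      have hR : (∑ i : Fin d, if bitv d j = bitv d i then c i else 0) = c j := by
        rw [Finset.sum_eq_single j]
        · simp
        · intro b _ hb
          have : bitv d j ≠ bitv d b := fun h => hb ((bitv_inj d) h).symm
          simp [this]
        · simp
      rw [hL, hR]
      field_simp
      rw [← Complex.exp_add,
        show -(2 * (Real.pi:ℂ) * Complex.I * (j:ℕ) * (m:ℕ) / d) +
          2 * (Real.pi:ℂ) * Complex.I * (j:ℕ) * (m:ℕ) / d = 0 by ring,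
        Complex.exp_zero, one_mul]
    · push_neg at h
      rw [Phi_not d c m f h]
      rw [Finset.sum_eq_zero, Finset.sum_eq_zero]
      · simp
      · intro i _; simp [h i]
      · intro i _; simp [h i]
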